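/- Let a and b be coprime odd integers with a + b ≠ 0. Then a positive integer d is 2^1-evenly-good (i.e., 2d divides a^k + b^k for some even integer k ≥ 2) if and only if d is odd and either d = 1 or there exists an integer s ≥ 2 such that for every prime p dividing d, 2^s exactly divides the multiplicative order of a·b^{-1} modulo p (2^s divides it and 2^{s+1} does not). -/

import Mathlib

private lemma lemD' {k n : ℕ} (hk : 0 < k) (h1 : n ∣ 2 * k) (h2 : ¬ n ∣ k) :
    2 ^ (padicValNat 2 k + 1) ∣ n ∧ ¬ 2 ^ (padicValNat 2 k + 2) ∣ n := by
  have hn : n ≠ 0 := by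
    rintro rfl
    rw [zero_dvd_iff] at h1
    omega
  have hfact : Fact (Nat.Prime 2) := ⟨Nat.prime_two⟩
  constructor
  · by_contra hnd
    have hα : padicValNat 2 n ≤ padicValNat 2 k := by
      by_contra hlt
      push_neg at hlt
      exact hnd (dvd_trans (pow_dvd_pow 2 hlt) pow_padicValNat_dvd)
    have hcodd : ¬ 2 ∣ ordCompl[2] n := Nat.not_dvd_ordCompl Nat.prime_two hn
    have hcop2 : Nat.Coprime 2 (ordCompl[2] n) :=
      (Nat.prime_two.coprime_iff_not_dvd).mpr hcodd
    have hcdvd : ordCompl[2] n ∣ k := by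
      have h' : ordCompl[2] n ∣ 2 * k := (Nat.ordCompl_dvd n 2).trans h1
      exact hcop2.symm.dvd_of_dvd_mul_left h'
    have hpdvd : ordProj[2] n ∣ k := by
      rw [Nat.factorization_def n Nat.prime_two]
      calc 2 ^ padicValNat 2 n ∣ 2 ^ padicValNat 2 k := pow_dvd_pow 2 hα
        _ ∣ k := pow_padicValNat_dvd
    have hcop : Nat.Coprime (ordProj[2] n) (ordCompl[2] n) :=
      Nat.Coprime.pow_left _ hcop2
    have := hcop.mul_dvd_of_dvd_of_dvd hpdvd hcdvd
    rw [Nat.ordProj_mul_ordCompl_eq_self] at this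
    exact h2 this
  · intro hnd
    have h2k : 2 ^ (padicValNat 2 k + 2) ∣ 2 * k := hnd.trans h1
    have : 2 ^ (padicValNat 2 k + 1) ∣ k := by
      have h' : 2 * 2 ^ (padicValNat 2 k + 1) ∣ 2 * k := by
        calc 2 * 2 ^ (padicValNat 2 k + 1) = 2 ^ (padicValNat 2 k + 2) := by ring
          _ ∣ 2 * k := h2k
      exact (mul_dvd_mul_iff_left (two_ne_zero)).mp h'
    exact pow_succ_padicValNat_not_dvd hk.ne' this

/-- Let `a` and `b` be coprime odd integers with `a + b ≠ 0`. A positive integer `d` is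
`2`-evenly-good if and only if `d` is odd and either `d = 1` or there exists `s ≥ 2`
such that for every prime `p ∣ d` the order of `a·b⁻¹` modulo `p` is exactly divisible
by `2^s`. -/
theorem two_evenly_good_iff
    (a b : ℤ) (ha : Odd a) (hb : Odd b) (hco : IsCoprime a b) (hab : a + b ≠ 0)
    (d : ℕ) (hd : 0 < d) :
    (∃ k : ℕ, 2 ≤ k ∧ Even k ∧ ((2 * d : ℕ) : ℤ) ∣ a ^ k + b ^ k) ↔
      (Odd d ∧ (d = 1 ∨
        ∃ s : ℕ, 2 ≤ s ∧ ∀ p : ℕ, p.Prime → p ∣ d →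
          2 ^ s ∣ orderOf ((a : ZMod p) * (b : ZMod p)⁻¹) ∧
            ¬ 2 ^ (s + 1) ∣ orderOf ((a : ZMod p) * (b : ZMod p)⁻¹))) := by
  constructor
  · rintro ⟨k, hk2, hkeven, hdvd⟩
    have hk0 : 0 < k := by omega
    -- `d` is odd
    have hdodd : Odd d := by
      rw [Nat.odd_iff]
      by_contra h
      have h2d : 2 ∣ d := by omega
      obtain ⟨e, rfl⟩ := h2d
      have h4 : ((4 : ℕ) : ℤ) ∣ a ^ k + b ^ k := by
        refine dvd_trans ?_ hdvd
        exact_mod_cast (by exact Dvd.intro e (by ring) : (4 : ℕ) ∣ 2 * (2 * e))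
      have h40 : ((a ^ k + b ^ k : ℤ) : ZMod 4) = 0 := by
        rw [ZMod.intCast_zmod_eq_zero_iff_dvd]
        exact h4
      obtain ⟨t, rfl⟩ := hkeven
      obtain ⟨c, rfl⟩ := ha
      obtain ⟨c', rfl⟩ := hb
      push_cast at h40
      have hsq : ∀ x : ZMod 4, (2 * x + 1) ^ (t + t) = 1 := by
        intro x
        have : (2 * x + 1) ^ (t + t) = ((2 * x + 1) ^ 2) ^ t := by
          rw [← pow_mul]; ring_nf
        rw [this]
        have h1 : (2 * x + 1) ^ 2 = 1 := by
          have h4z : (4 : ZMod 4) = 0 := by decide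
          linear_combination (x ^ 2 + x) * h4z
        rw [h1, one_pow]
      rw [hsq, hsq] at h40
      revert h40
      decide
    refine ⟨hdodd, ?_⟩
    rcases eq_or_ne d 1 with h1 | h1
    · exact Or.inl h1
    right
    refine ⟨padicValNat 2 k + 1, ?_, ?_⟩
    · have hv := pow_succ_padicValNat_not_dvd (p := 2) hk0.ne'
      have h2k : 2 ∣ k := hkeven.two_dvd
      rcases Nat.eq_zero_or_pos (padicValNat 2 k) with h0 | h0
      · rw [h0] at hv; simp at hv; omega
      · omega
    · intro p hp hpd
      haveI : Fact p.Prime := ⟨hp⟩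
      have hp2 : p ≠ 2 := by
        rintro rfl
        rw [Nat.odd_iff] at hdodd
        omega
      have hpdk : ((p : ℕ) : ℤ) ∣ a ^ k + b ^ k := by
        refine dvd_trans ?_ hdvd
        exact_mod_cast Dvd.dvd.mul_left hpd 2
      have hb0 : (b : ZMod p) ≠ 0 := by
        intro h0
        have hpb : (p : ℤ) ∣ b := by
          rwa [ZMod.intCast_zmod_eq_zero_iff_dvd] at h0
        have hpa : (p : ℤ) ∣ a := by
          have h1 : (p : ℤ) ∣ a ^ k := by
            have : (p : ℤ) ∣ b ^ k := dvd_pow hpb hk0.ne'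
            have := dvd_sub hpdk this
            simpa using this
          exact (Nat.prime_iff_prime_int.mp hp).dvd_of_dvd_pow h1
        exact (Nat.prime_iff_prime_int.mp hp).not_unit (hco.isUnit_of_dvd' hpa hpb)
      have habk : (a : ZMod p) ^ k = -(b : ZMod p) ^ k := by
        have h0 : ((a ^ k + b ^ k : ℤ) : ZMod p) = 0 := by
          rw [ZMod.intCast_zmod_eq_zero_iff_dvd]; exact hpdk
        push_cast at h0
        exact eq_neg_of_add_eq_zero_left h0
      have hx : ((a : ZMod p) * (b : ZMod p)⁻¹) ^ k = -1 := by
        rw [mul_pow, inv_pow, mul_inv_eq_iff_eq_mul₀ (pow_ne_zero _ hb0), habk]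
        ring
      have hne : (-1 : ZMod p) ≠ 1 := by
        haveI : Fact (2 < p) := ⟨lt_of_le_of_ne hp.two_le (Ne.symm hp2)⟩
        exact ZMod.neg_one_ne_one
      have hord1 : orderOf ((a : ZMod p) * (b : ZMod p)⁻¹) ∣ 2 * k := by
        apply orderOf_dvd_of_pow_eq_one
        rw [mul_comm 2 k, pow_mul, hx]
        ring
      have hord2 : ¬ orderOf ((a : ZMod p) * (b : ZMod p)⁻¹) ∣ k := by
        rw [orderOf_dvd_iff_pow_eq_one, hx]
        exact hne
      exact lemD' hk0 hord1 hord2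
  · rintro ⟨hdodd, h1 | ⟨s, hs, hP⟩⟩
    · refine ⟨2, le_refl 2, even_two, ?_⟩
      subst h1
      have : Even (a ^ 2 + b ^ 2) := (ha.pow).add_odd (hb.pow)
      simpa using this.two_dvd
    · classical
      set x : (p : ℕ) → ZMod p := fun p => (a : ZMod p) * (b : ZMod p)⁻¹ with hxdef
      set f : ℕ → ℕ := fun p =>
        (orderOf (x p) / 2 ^ s) * p ^ (d.factorization p - 1) with hfdef
      set M : ℕ := ∏ p ∈ d.primeFactors, f p with hMdef
      set k : ℕ := 2 ^ (s - 1) * M with hkdef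
      -- basic facts about each prime factor
      have hfacts : ∀ p ∈ d.primeFactors,
          orderOf (x p) ≠ 0 ∧ Odd (orderOf (x p) / 2 ^ s) ∧ Odd p ∧
          2 ^ s * (orderOf (x p) / 2 ^ s) = orderOf (x p) := by
        intro p hpF
        have hp := Nat.prime_of_mem_primeFactors hpF
        have hpd := Nat.dvd_of_mem_primeFactors hpF
        obtain ⟨hdl, hdu⟩ := hP p hp hpd
        have hn0 : orderOf (x p) ≠ 0 := by
          intro h0
          rw [h0] at hdu
          exact hdu (dvd_zero _)
        have hm : 2 ^ s * (orderOf (x p) / 2 ^ s) = orderOf (x p) :=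
          Nat.mul_div_cancel' hdl
        have hmodd : Odd (orderOf (x p) / 2 ^ s) := by
          rw [← Nat.not_even_iff_odd]
          rintro ⟨t, ht⟩
          apply hdu
          rw [← hm, ht, pow_succ]
          exact ⟨t, by ring⟩
        have hpodd : Odd p := by
          have hp2 : p ≠ 2 := by
            rintro rfl
            rw [Nat.odd_iff] at hdodd
            obtain ⟨e, rfl⟩ := hpd
            omega
          exact hp.odd_of_ne_two hp2
        exact ⟨hn0, hmodd, hpodd, hm⟩
      have hM0 : 0 < M := by
        rw [hMdef]
        apply Finset.prod_pos
        intro p hpF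
        obtain ⟨hn0, hmodd, hpodd, hm⟩ := hfacts p hpF
        have h1 : 0 < orderOf (x p) / 2 ^ s := hmodd.pos
        have h2 : 0 < p ^ (d.factorization p - 1) :=
          pow_pos (Nat.prime_of_mem_primeFactors hpF).pos _
        exact Nat.mul_pos h1 h2
      have hk2dvd : 2 ∣ k := by
        rw [hkdef]
        exact dvd_mul_of_dvd_left (dvd_pow_self 2 (by omega : s - 1 ≠ 0)) M
      have hkpos : 0 < k := by
        rw [hkdef]
        exact Nat.mul_pos (pow_pos (by norm_num) _) hM0
      -- Main claim: p ^ (d.factorization p) divides a ^ k + b ^ k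
      have claimB : ∀ p ∈ d.primeFactors,
          ((p : ℤ)) ^ (d.factorization p) ∣ a ^ k + b ^ k := by
        intro p hpF
        have hp := Nat.prime_of_mem_primeFactors hpF
        have hpd := Nat.dvd_of_mem_primeFactors hpF
        haveI : Fact p.Prime := ⟨hp⟩
        obtain ⟨hn0, hmodd, hpodd, hm⟩ := hfacts p hpF
        set n := orderOf (x p) with hndef
        set m := n / 2 ^ s with hmdef
        set e := d.factorization p with hedef
        have he1 : 1 ≤ e := hp.factorization_pos_of_dvd hd.ne' hpd
        set k₀ := 2 ^ (s - 1) * m with hk₀def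
        have h2k₀ : 2 * k₀ = n := by
          rw [hk₀def, ← mul_assoc, ← pow_succ']
          rw [show s - 1 + 1 = s by omega]
          exact hm
        have hk₀pos : 0 < k₀ :=
          Nat.mul_pos (pow_pos (by norm_num) _) hmodd.pos
        have hxne : x p ≠ 0 := by
          intro h0
          have h1 : x p ^ n = 1 := pow_orderOf_eq_one _
          rw [h0, zero_pow hn0] at h1
          exact zero_ne_one h1
        have hb0 : (b : ZMod p) ≠ 0 := by
          intro h0
          apply hxne
          simp only [hxdef, h0, inv_zero, mul_zero]
        have hz2 : (x p ^ k₀) * (x p ^ k₀) = 1 := by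
          rw [← pow_add, show k₀ + k₀ = n by omega]
          exact pow_orderOf_eq_one _
        have hz1 : x p ^ k₀ ≠ 1 := by
          intro h
          have hdvd' : n ∣ k₀ := orderOf_dvd_iff_pow_eq_one.mpr h
          have := Nat.le_of_dvd hk₀pos hdvd'
          omega
        have hz : x p ^ k₀ = -1 := by
          rcases mul_self_eq_one_iff.mp hz2 with h | h
          · exact absurd h hz1
          · exact h
        have hstep1 : (p : ℤ) ∣ a ^ k₀ + b ^ k₀ := by
          rw [← ZMod.intCast_zmod_eq_zero_iff_dvd]
          push_cast
          simp only [hxdef] at hz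
          rw [mul_pow, inv_pow, mul_inv_eq_iff_eq_mul₀ (pow_ne_zero _ hb0)] at hz
          rw [hz]
          ring
        have hstep2 : (p : ℤ) ^ e ∣ a ^ (k₀ * p ^ (e - 1)) + b ^ (k₀ * p ^ (e - 1)) := by
          have h := dvd_sub_pow_of_dvd_sub (p := p) (a := a ^ k₀) (b := -(b ^ k₀))
            (by rw [sub_neg_eq_add]; exact hstep1) (e - 1)
          rw [show e - 1 + 1 = e by omega] at h
          have hoddpow : Odd (p ^ (e - 1)) := hpodd.pow
          rw [Odd.neg_pow hoddpow, sub_neg_eq_add, ← pow_mul, ← pow_mul] at h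
          exact_mod_cast h
        set W := ∏ q ∈ d.primeFactors.erase p, f q with hWdef
        have hWodd : Odd W := by
          rw [hWdef]
          refine Finset.prod_induction f Odd (fun _ _ => Odd.mul) odd_one ?_
          intro q hq
          obtain ⟨_, hmq, hq2, _⟩ := hfacts q (Finset.mem_of_mem_erase hq)
          exact hmq.mul (hq2.pow)
        have hkeq : k = (k₀ * p ^ (e - 1)) * W := by
          have hMe : M = f p * W := (Finset.mul_prod_erase _ f hpF).symm
          have hfp : f p = m * p ^ (e - 1) := rfl
          calc k = 2 ^ (s - 1) * (f p * W) := by rw [hkdef, hMe]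
            _ = (k₀ * p ^ (e - 1)) * W := by rw [hfp, hk₀def]; ring
        have hmod : a ^ (k₀ * p ^ (e - 1)) ≡ -(b ^ (k₀ * p ^ (e - 1))) [ZMOD (p : ℤ) ^ e] := by
          rw [Int.modEq_iff_dvd]
          have h' : -(b ^ (k₀ * p ^ (e - 1))) - a ^ (k₀ * p ^ (e - 1)) =
              -(a ^ (k₀ * p ^ (e - 1)) + b ^ (k₀ * p ^ (e - 1))) := by ring
          rw [h']
          exact dvd_neg.mpr hstep2
        have hfin := hmod.pow W
        rw [← pow_mul, Odd.neg_pow hWodd, ← pow_mul, ← hkeq] at hfin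
        have hdvd' := Int.ModEq.dvd hfin
        have : a ^ k + b ^ k = -(-(b ^ k) - a ^ k) := by ring
        rw [this]
        exact dvd_neg.mpr hdvd'
      -- assemble
      have ha0 : a ≠ 0 := by
        rintro rfl
        simp [Int.odd_iff] at ha
      have hkevn : Even k := by rw [Nat.even_iff]; omega
      have hXpos : 0 < a ^ k + b ^ k := by
        have h1 : 0 < a ^ k := hkevn.pow_pos ha0
        have h2 : 0 ≤ b ^ k := hkevn.pow_nonneg b
        omega
      have hN0 : (a ^ k + b ^ k).natAbs ≠ 0 := Int.natAbs_ne_zero.mpr hXpos.ne'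
      have hdN : d ∣ (a ^ k + b ^ k).natAbs := by
        rw [← Nat.factorization_le_iff_dvd hd.ne' hN0, Finsupp.le_def]
        intro p
        by_cases hpF : p ∈ d.primeFactors
        · have hp := Nat.prime_of_mem_primeFactors hpF
          rw [← Nat.Prime.pow_dvd_iff_le_factorization hp hN0]
          refine Int.natCast_dvd.mp ?_
          push_cast
          exact claimB p hpF
        · rw [← Nat.support_factorization] at hpF
          rw [Finsupp.notMem_support_iff.mp hpF]
          exact Nat.zero_le _
      have h2N : 2 ∣ (a ^ k + b ^ k).natAbs :=
        (Int.natAbs_even.mpr ((ha.pow).add_odd (hb.pow))).two_dvd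
      have hco2d : Nat.Coprime 2 d := by
        refine Nat.prime_two.coprime_iff_not_dvd.mpr ?_
        rw [Nat.odd_iff] at hdodd
        omega
      have hfinal := hco2d.mul_dvd_of_dvd_of_dvd h2N hdN
      exact ⟨k, Nat.le_of_dvd hkpos hk2dvd, hkevn, Int.natCast_dvd.mpr hfinal⟩
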